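/- Let G be a peculiar (claw, co-diamond, 2K_2)-free graph with co-triangle {a,b,c} and sets S_{a,b}, S_{b,c}, S_{a,c}. Then every vertex of S_{a,b} is adjacent to every vertex of S_{b,c} (and similarly for the other pairs of sets). -/

import Mathlib

set_option maxHeartbeats 1600000


/-- In a peculiar (claw, co-diamond, 2K₂)-free graph, every vertex of
`S_{x,y}` is adjacent to every vertex of `S_{y,z}`, for distinct co-triangle
vertices `x, y, z`. -/
theorem stmt_12 {V : Type*} (G : SimpleGraph V)
    (hconn : G.Connected)
    (hclaw : ¬ ∃ v x y z : V, x ≠ y ∧ x ≠ z ∧ y ≠ z ∧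
      G.Adj v x ∧ G.Adj v y ∧ G.Adj v z ∧ ¬ G.Adj x y ∧ ¬ G.Adj x z ∧ ¬ G.Adj y z)
    (hcd : ¬ ∃ w x y z : V, w ≠ x ∧ w ≠ y ∧ w ≠ z ∧ x ≠ y ∧ x ≠ z ∧ y ≠ z ∧
      G.Adj w x ∧ ¬ G.Adj w y ∧ ¬ G.Adj w z ∧ ¬ G.Adj x y ∧ ¬ G.Adj x z ∧ ¬ G.Adj y z)
    (a b c : V) (hab : a ≠ b) (hac : a ≠ c) (hbc : b ≠ c)
    (hnab : ¬ G.Adj a b) (hnac : ¬ G.Adj a c) (hnbc : ¬ G.Adj b c)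
    (htwo : ∀ v : V, v ∉ ({a, b, c} : Set V) →
      ((G.Adj v a ∧ G.Adj v b ∧ ¬ G.Adj v c) ∨
       (G.Adj v a ∧ ¬ G.Adj v b ∧ G.Adj v c) ∨
       (¬ G.Adj v a ∧ G.Adj v b ∧ G.Adj v c)))
    (h2K2 : ¬ ∃ w x y z : V, w ≠ x ∧ w ≠ y ∧ w ≠ z ∧ x ≠ y ∧ x ≠ z ∧ y ≠ z ∧
      G.Adj w x ∧ G.Adj y z ∧ ¬ G.Adj w y ∧ ¬ G.Adj w z ∧ ¬ G.Adj x y ∧ ¬ G.Adj x z) :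
    ∀ x y z : V, x ∈ ({a, b, c} : Set V) → y ∈ ({a, b, c} : Set V) →
      z ∈ ({a, b, c} : Set V) → x ≠ y → y ≠ z → x ≠ z →
      ∀ u v : V, u ∉ ({a, b, c} : Set V) → v ∉ ({a, b, c} : Set V) →
        G.Adj u x → G.Adj u y → G.Adj v y → G.Adj v z → G.Adj u v := by
  intro x y z hx hy hz hxy hyz hxz u v hu hv hux huy hvy hvz
  by_contra huv
  have hxu : x ≠ u := fun h => hu (h ▸ hx)
  have hxv : x ≠ v := fun h => hv (h ▸ hx)
  have huz : u ≠ z := fun h => hu (h.symm ▸ hz)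
  have hvz' : v ≠ z := fun h => hv (h.symm ▸ hz)
  have h1 := htwo u hu
  have h2 := htwo v hv
  have hnba : ¬ G.Adj b a := fun h => hnab (G.adj_symm h)
  have hnca : ¬ G.Adj c a := fun h => hnac (G.adj_symm h)
  have hncb : ¬ G.Adj c b := fun h => hnbc (G.adj_symm h)
  have key : ¬ G.Adj x z ∧ ¬ G.Adj u z ∧ ¬ G.Adj v x ∧ u ≠ v := by
    clear hclaw hcd h2K2 hconn htwo hu hv hnab hnac hnbc huv
    simp only [Set.mem_insert_iff, Set.mem_singleton_iff] at hx hy hz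
    rcases hx with rfl | rfl | rfl <;> rcases hy with rfl | rfl | rfl <;>
      rcases hz with rfl | rfl | rfl <;>
      refine ⟨by tauto, by tauto, by tauto, fun h => by subst h; tauto⟩
  obtain ⟨hnxz, hnuz, hnvx, huv'⟩ := key
  exact h2K2 ⟨x, u, v, z, hxu, hxv, hxz, huv', huz, hvz', G.adj_symm hux, hvz,
    fun h => hnvx (G.adj_symm h), hnxz, huv, hnuz⟩
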